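/- Let G = (V,E) be a connected finite simple graph with n = |V|, let k be the largest cardinality of an independent set of G, and let 𝒢 be the graph obtained from G by the subdivision-path-apex construction. Then the largest cardinality of a proper stalled subset of 𝒢 equals (2n+1)·|E| + k. -/

import Mathlib

/-- An empty vertex `v` is forced by the filled set `F` if some filled vertex `u ∈ F`
adjacent to `v` has `v` as its unique neighbor outside `F`. -/
def IsForced {W : Type*} (H : SimpleGraph W) (F : Set W) (v : W) : Prop :=
  v ∉ F ∧ ∃ u, u ∈ F ∧ H.Adj u v ∧ ∀ w, H.Adj u w → w ∉ F → w = v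

/-- An empty vertex `v` is skew forced by `F` if some vertex `u` (filled or not)
adjacent to `v` has `v` as its unique neighbor outside `F`. -/
def IsSkewForced {W : Type*} (H : SimpleGraph W) (F : Set W) (v : W) : Prop :=
  v ∉ F ∧ ∃ u, H.Adj u v ∧ ∀ w, H.Adj u w → w ∉ F → w = v

/-- `F` is stalled if no empty vertex is forced by `F`. -/
def Stalled {W : Type*} (H : SimpleGraph W) (F : Set W) : Prop :=
  ∀ v, ¬ IsForced H F v

/-- `F` is skew stalled if no empty vertex is skew forced by `F`. -/
def SkewStalled {W : Type*} (H : SimpleGraph W) (F : Set W) : Prop :=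
  ∀ v, ¬ IsSkewForced H F v

/-- A set of vertices is independent if its vertices are pairwise non-adjacent. -/
def IndepIn {W : Type*} (H : SimpleGraph W) (U : Set W) : Prop :=
  U.Pairwise fun a b => ¬ H.Adj a b

/-- Vertex set of the subdivision-path-apex construction: the vertices of `G`,
vertices `e^i` for each edge `e` and `0 ≤ i ≤ 2n`, and one apex vertex `ε`. -/
abbrev GVert {V : Type*} [Fintype V] (G : SimpleGraph V) : Type _ :=
  V ⊕ (G.edgeSet × Fin (2 * Fintype.card V + 1)) ⊕ Unit

/-- Generating relation: `v ~ e^0` when `v ∈ e`; `e^i ~ e^{i+1}`; `ε ~ e^0`. -/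
def gRel {V : Type*} [Fintype V] (G : SimpleGraph V) : GVert G → GVert G → Prop
  | Sum.inl v, Sum.inr (Sum.inl (e, i)) => i.val = 0 ∧ v ∈ (e : Sym2 V)
  | Sum.inr (Sum.inl (e, i)), Sum.inr (Sum.inl (e', j)) => e = e' ∧ i.val + 1 = j.val
  | Sum.inr (Sum.inr _), Sum.inr (Sum.inl (_, i)) => i.val = 0
  | _, _ => False

/-- The subdivision-path-apex construction `𝒢`. -/
def GG {V : Type*} [Fintype V] (G : SimpleGraph V) : SimpleGraph (GVert G) :=
  SimpleGraph.fromRel (gRel G)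

section
variable {V : Type*} [Fintype V] {G : SimpleGraph V}

lemma adj_pv_pv {e e' : G.edgeSet} {i j : Fin (2 * Fintype.card V + 1)} :
    (GG G).Adj (Sum.inr (Sum.inl (e, i))) (Sum.inr (Sum.inl (e', j))) ↔
      e = e' ∧ (i.val + 1 = j.val ∨ j.val + 1 = i.val) := by
  simp only [GG, SimpleGraph.fromRel_adj, gRel]
  constructor
  · rintro ⟨hne, (⟨he, h⟩ | ⟨he, h⟩)⟩
    · exact ⟨he, Or.inl h⟩
    · exact ⟨he.symm, Or.inr h⟩
  · rintro ⟨rfl, (h | h)⟩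
    · exact ⟨by simp [Fin.ext_iff]; omega, Or.inl ⟨rfl, h⟩⟩
    · exact ⟨by simp [Fin.ext_iff]; omega, Or.inr ⟨rfl, h⟩⟩

lemma adj_pv_inl {e : G.edgeSet} {i : Fin (2 * Fintype.card V + 1)} {x : V} :
    (GG G).Adj (Sum.inr (Sum.inl (e, i))) (Sum.inl x) ↔ i.val = 0 ∧ x ∈ (e : Sym2 V) := by
  simp only [GG, SimpleGraph.fromRel_adj, gRel]
  constructor
  · rintro ⟨-, (h | h)⟩
    · exact h.elim
    · exact h
  · rintro ⟨h0, hx⟩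
    exact ⟨by simp, Or.inr ⟨h0, hx⟩⟩

lemma adj_pv_eps {e : G.edgeSet} {i : Fin (2 * Fintype.card V + 1)} {u : Unit} :
    (GG G).Adj (Sum.inr (Sum.inl (e, i))) (Sum.inr (Sum.inr u)) ↔ i.val = 0 := by
  simp only [GG, SimpleGraph.fromRel_adj, gRel]
  constructor
  · rintro ⟨-, (h | h)⟩
    · exact h.elim
    · exact h
  · intro h0
    exact ⟨by simp, Or.inr h0⟩

lemma not_adj_inl_inl {x y : V} : ¬ (GG G).Adj (Sum.inl x) (Sum.inl y) := by
  simp [GG, SimpleGraph.fromRel_adj, gRel]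

lemma not_adj_inl_eps {x : V} {u : Unit} : ¬ (GG G).Adj (Sum.inl x) (Sum.inr (Sum.inr u)) := by
  simp [GG, SimpleGraph.fromRel_adj, gRel]

lemma not_adj_eps_eps {u u' : Unit} : ¬ (GG G).Adj (Sum.inr (Sum.inr u)) (Sum.inr (Sum.inr u')) := by
  simp [GG, SimpleGraph.fromRel_adj, gRel]

/-- path vertex indexed by a natural number (mod 2n+1) -/
def pvN (e : G.edgeSet) (m : ℕ) : GVert G :=
  Sum.inr (Sum.inl (e, ⟨m % (2 * Fintype.card V + 1), Nat.mod_lt _ (Nat.succ_pos _)⟩))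

lemma pvN_eq (e : G.edgeSet) (j : Fin (2 * Fintype.card V + 1)) (m : ℕ)
    (h : j.val = m % (2 * Fintype.card V + 1)) :
    (Sum.inr (Sum.inl (e, j)) : GVert G) = pvN e m := by
  simp only [pvN, Sum.inr.injEq, Sum.inl.injEq, Prod.ext_iff, Fin.ext_iff]
  exact ⟨trivial, h⟩

lemma pvN_eq_self (e : G.edgeSet) (j : Fin (2 * Fintype.card V + 1)) :
    pvN e j.val = (Sum.inr (Sum.inl (e, j)) : GVert G) :=
  (pvN_eq e j j.val (Nat.mod_eq_of_lt j.isLt).symm).symm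

end


section
variable {V : Type*} [Fintype V] {G : SimpleGraph V}

lemma step_down {S : Set (GVert G)} (hS : Stalled (GG G) S) (e : G.edgeSet)
    (m : ℕ) (hm : m + 1 ≤ 2 * Fintype.card V)
    (h1 : pvN e (m+1) ∈ S)
    (h2 : m + 2 ≤ 2 * Fintype.card V → pvN e (m+2) ∈ S) :
    pvN e m ∈ S := by
  set n := Fintype.card V with hn
  have hmod : ∀ a, a ≤ 2*n → a % (2*n+1) = a := fun a ha => Nat.mod_eq_of_lt (by omega)
  by_contra h0
  refine hS (pvN e m) ⟨h0, pvN e (m+1), h1, ?_, ?_⟩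
  · simp only [pvN]
    refine adj_pv_pv.mpr ⟨rfl, Or.inr ?_⟩
    simp only []
    rw [hmod _ (by omega), hmod _ (by omega)]
  · rintro (x | ⟨e', j⟩ | u) hadj hw
    · simp only [pvN] at hadj
      have h := (adj_pv_inl.mp hadj).1
      simp only [] at h
      rw [hmod _ (by omega)] at h
      omega
    · simp only [pvN] at hadj
      obtain ⟨rfl, hj⟩ := adj_pv_pv.mp hadj
      simp only [] at hj
      rw [hmod _ (by omega)] at hj
      rcases hj with hj | hj
      · have hm2 : m + 2 ≤ 2*n := by have := j.isLt; omega
        have he : (Sum.inr (Sum.inl (e, j)) : GVert G) = pvN e (m+2) :=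
          pvN_eq e j (m+2) (by rw [hmod _ (by omega)]; omega)
        exact absurd (show (Sum.inr (Sum.inl (e, j)) : GVert G) ∈ S by
          rw [he]; exact h2 hm2) hw
      · exact pvN_eq e j m (by rw [hmod _ (by omega)]; omega)
    · simp only [pvN] at hadj
      have h := adj_pv_eps.mp hadj
      simp only [] at h
      rw [hmod _ (by omega)] at h
      omega

lemma step_up {S : Set (GVert G)} (hS : Stalled (GG G) S) (e : G.edgeSet)
    (m : ℕ) (hm : m + 2 ≤ 2 * Fintype.card V)
    (h1 : pvN e (m+1) ∈ S) (h0 : pvN e m ∈ S) :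
    pvN e (m+2) ∈ S := by
  set n := Fintype.card V with hn
  have hmod : ∀ a, a ≤ 2*n → a % (2*n+1) = a := fun a ha => Nat.mod_eq_of_lt (by omega)
  by_contra hc
  refine hS (pvN e (m+2)) ⟨hc, pvN e (m+1), h1, ?_, ?_⟩
  · simp only [pvN]
    refine adj_pv_pv.mpr ⟨rfl, Or.inl ?_⟩
    simp only []
    rw [hmod _ (by omega), hmod _ (by omega)]
  · rintro (x | ⟨e', j⟩ | u) hadj hw
    · simp only [pvN] at hadj
      have h := (adj_pv_inl.mp hadj).1
      simp only [] at h
      rw [hmod _ (by omega)] at h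
      omega
    · simp only [pvN] at hadj
      obtain ⟨rfl, hj⟩ := adj_pv_pv.mp hadj
      simp only [] at hj
      rw [hmod _ (by omega)] at hj
      rcases hj with hj | hj
      · exact pvN_eq e j (m+2) (by rw [hmod _ (by omega)]; omega)
      · exact absurd (show (Sum.inr (Sum.inl (e, j)) : GVert G) ∈ S by
          rw [pvN_eq e j m (by rw [hmod _ (by omega)]; omega)]; exact h0) hw
    · simp only [pvN] at hadj
      have h := adj_pv_eps.mp hadj
      simp only [] at h
      rw [hmod _ (by omega)] at h
      omega

end


section
variable {V : Type*} [Fintype V] {G : SimpleGraph V}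

lemma path_all_filled {S : Set (GVert G)} (hS : Stalled (GG G) S) (e : G.edgeSet)
    (h2n : pvN e (2 * Fintype.card V) ∈ S) :
    ∀ m, m ≤ 2 * Fintype.card V → pvN e m ∈ S := by
  have key : ∀ d, ∀ m, m + d = 2 * Fintype.card V → pvN e m ∈ S := by
    intro d
    induction d using Nat.strong_induction_on with
    | _ d ih =>
      match d with
      | 0 => intro m hm; rw [show m = 2 * Fintype.card V by omega]; exact h2n
      | 1 =>
        intro m hm
        refine step_down hS e m (by omega) ?_ (fun h => absurd h (by omega))
        rw [show m + 1 = 2 * Fintype.card V by omega]; exact h2n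
      | (d+2) =>
        intro m hm
        exact step_down hS e m (by omega) (ih (d+1) (by omega) (m+1) (by omega))
          (fun _ => ih d (by omega) (m+2) (by omega))
  intro m hm
  exact key (2 * Fintype.card V - m) m (by omega)

lemma path_no_pair {S : Set (GVert G)} (hS : Stalled (GG G) S) (e : G.edgeSet)
    {j₀ : Fin (2 * Fintype.card V + 1)} (hj₀ : Sum.inr (Sum.inl (e, j₀)) ∉ S)
    (m : ℕ) (hm : m + 1 ≤ 2 * Fintype.card V)
    (h0 : pvN e m ∈ S) (h1 : pvN e (m+1) ∈ S) : False := by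
  have up : ∀ d, m + 1 + d ≤ 2 * Fintype.card V → pvN e (m+d) ∈ S ∧ pvN e (m+1+d) ∈ S := by
    intro d
    induction d with
    | zero => intro _; exact ⟨h0, h1⟩
    | succ d ih =>
      intro h
      obtain ⟨ha, hb⟩ := ih (by omega)
      constructor
      · rw [show m + (d+1) = m+1+d by omega]; exact hb
      · rw [show m + 1 + (d+1) = (m+d)+2 by omega]
        exact step_up hS e (m+d) (by omega)
          (by rw [show m+d+1 = m+1+d by omega]; exact hb) ha
  have h2n : pvN e (2 * Fintype.card V) ∈ S := by
    have := (up (2 * Fintype.card V - (m+1)) (by omega)).2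
    rwa [show m+1+(2 * Fintype.card V-(m+1)) = 2 * Fintype.card V by omega] at this
  have := path_all_filled hS e h2n j₀.val (by omega)
  rw [pvN_eq_self] at this
  exact hj₀ this

lemma path_count {S : Set (GVert G)} (hS : Stalled (GG G) S) (e : G.edgeSet)
    {j₀ : Fin (2 * Fintype.card V + 1)} (hj₀ : Sum.inr (Sum.inl (e, j₀)) ∉ S) :
    Fintype.card V + 1 ≤ Sᶜ.ncard := by
  -- n ≥ 1 since there is an edge
  have hn1 : 1 ≤ Fintype.card V := by
    rcases e with ⟨e, he⟩
    induction e using Sym2.ind with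
    | _ a b =>
      exact Fintype.card_pos_iff.mpr ⟨a⟩
  have hTop : pvN e (2 * Fintype.card V) ∉ S := by
    intro h
    exact hj₀ (by rw [← pvN_eq_self]; exact path_all_filled hS e h j₀.val (by omega))
  set Fs : Set (Fin (2 * Fintype.card V+1)) := {j | Sum.inr (Sum.inl (e, j)) ∈ S} with hFs
  have hFlt : ∀ j ∈ Fs, j.val < 2 * Fintype.card V := by
    intro j hj
    rcases Nat.lt_or_ge j.val (2 * Fintype.card V) with h | h
    · exact h
    · exfalso
      have hv : j.val = 2 * Fintype.card V := by have := j.isLt; omega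
      apply hTop
      rw [← hv, pvN_eq_self]
      exact hj
  have hFcard : Fs.ncard ≤ Fintype.card V := by
    have hinj : Set.InjOn
        (fun j : Fin (2 * Fintype.card V+1) =>
          (⟨min (j.val / 2) (Fintype.card V - 1), by omega⟩ : Fin (Fintype.card V))) Fs := by
      intro a ha b hb hab
      simp only [Fin.mk.injEq] at hab
      have ha2 := hFlt a ha
      have hb2 := hFlt b hb
      rw [min_eq_left (by omega), min_eq_left (by omega)] at hab
      rcases Nat.lt_trichotomy a.val b.val with h | h | h
      · exfalso
        have hb1 : b.val = a.val + 1 := by omega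
        exact path_no_pair hS e hj₀ a.val (by omega)
          (by rw [pvN_eq_self]; exact ha)
          (by rw [← hb1, pvN_eq_self]; exact hb)
      · exact Fin.ext h
      · exfalso
        have ha1 : a.val = b.val + 1 := by omega
        exact path_no_pair hS e hj₀ b.val (by omega)
          (by rw [pvN_eq_self]; exact hb)
          (by rw [← ha1, pvN_eq_self]; exact ha)
    have h := Set.ncard_le_ncard_of_injOn (t := (Set.univ : Set (Fin (Fintype.card V))))
      (fun j : Fin (2 * Fintype.card V+1) =>
        (⟨min (j.val / 2) (Fintype.card V - 1), by omega⟩ : Fin (Fintype.card V)))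
      (fun a _ => Set.mem_univ _) hinj (Set.toFinite _)
    simpa [Set.ncard_univ] using h
  have hcompl : Fs.ncard + Fsᶜ.ncard = 2 * Fintype.card V+1 := by
    rw [Set.ncard_add_ncard_compl]
    simp [Nat.card_eq_fintype_card]
  have hinj : Fsᶜ.ncard ≤ Sᶜ.ncard := by
    refine Set.ncard_le_ncard_of_injOn
      (fun j => (Sum.inr (Sum.inl (e, j)) : GVert G)) ?_ ?_ (Set.toFinite _)
    · intro j hj
      exact hj
    · intro a _ b _ hab
      simp only [Sum.inr.injEq, Sum.inl.injEq, Prod.mk.injEq] at hab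
      exact hab.2
  omega

end


section
variable {V : Type*} [Fintype V] {G : SimpleGraph V}

lemma compl_bound {S : Set (GVert G)} (hS : Stalled (GG G) S) (hne : S ≠ Set.univ)
    (hG : G.Connected) (k : ℕ)
    (hk : IsGreatest {m | ∃ U : Set V, IndepIn G U ∧ U.ncard = m} k) :
    Fintype.card V + 1 ≤ Sᶜ.ncard + k := by
  by_cases hpath : ∀ (e : G.edgeSet) (j : Fin (2 * Fintype.card V + 1)),
      Sum.inr (Sum.inl (e, j)) ∈ S
  · -- all path vertices filled
    by_cases heps : (Sum.inr (Sum.inr ()) : GVert G) ∈ S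
    · -- apex filled: the empty vertices of V are closed under adjacency
      set W : Set V := {v | (Sum.inl v : GVert G) ∈ S} with hW
      have hclosed : ∀ u v : V, u ∉ W → G.Adj u v → v ∉ W := by
        intro u v hu hadj hv
        have hadj' : s(v, u) ∈ G.edgeSet := by simpa using hadj.symm
        set e : G.edgeSet := ⟨s(v, u), hadj'⟩ with he
        refine hS (Sum.inl u) ⟨hu, Sum.inr (Sum.inl (e, (⟨0, by omega⟩ : Fin _))), hpath e _, ?_, ?_⟩
        · exact adj_pv_inl.mpr ⟨rfl, by simp [he]⟩
        · rintro (x | ⟨e', j⟩ | ⟨⟩) hadj2 hw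
          · obtain ⟨-, hx⟩ := adj_pv_inl.mp hadj2
            simp only [he, Sym2.mem_iff] at hx
            rcases hx with rfl | rfl
            · exact absurd hv (fun hh => hw hh)
            · rfl
          · exact absurd (hpath e' j) hw
          · exact absurd heps hw
      obtain ⟨v₀, hv₀⟩ : ∃ v₀, v₀ ∉ W := by
        by_contra hcon
        push_neg at hcon
        apply hne
        ext w
        simp only [Set.mem_univ, iff_true]
        rcases w with x | ⟨e', j⟩ | ⟨⟩
        · exact hcon x
        · exact hpath e' j
        · exact heps
      have hAllEmpty : ∀ v, v ∉ W := by
        have claim : ∀ a b : V, G.Walk a b → a ∉ W → b ∉ W := by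
          intro a b p
          induction p with
          | nil => exact id
          | cons h q ih => intro hu; exact ih (hclosed _ _ hu h)
        intro v
        obtain ⟨p⟩ := hG.preconnected v₀ v
        exact claim v₀ v p hv₀
      have hsub : (Sum.inl '' (Set.univ : Set V) : Set (GVert G)) ⊆ Sᶜ := by
        rintro w ⟨x, -, rfl⟩
        exact hAllEmpty x
      have hcard : Fintype.card V ≤ Sᶜ.ncard := by
        have := Set.ncard_le_ncard hsub (Set.toFinite _)
        rwa [Set.ncard_image_of_injective _ Sum.inl_injective, Set.ncard_univ,
          Nat.card_eq_fintype_card] at this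
      have hk1 : 1 ≤ k := by
        obtain ⟨v⟩ := hG.nonempty
        exact hk.2 ⟨{v}, Set.pairwise_singleton _ _, Set.ncard_singleton v⟩
      omega
    · -- apex empty: the filled vertices of V form an independent set
      set W : Set V := {v | (Sum.inl v : GVert G) ∈ S} with hW
      have hindep : IndepIn G W := by
        intro a ha b hb hab hadj
        have hadj' : s(a, b) ∈ G.edgeSet := by simpa using hadj
        set e : G.edgeSet := ⟨s(a, b), hadj'⟩ with he
        refine hS (Sum.inr (Sum.inr ()))
          ⟨heps, Sum.inr (Sum.inl (e, (⟨0, by omega⟩ : Fin _))), hpath e _, ?_, ?_⟩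
        · exact adj_pv_eps.mpr rfl
        · rintro (x | ⟨e', j⟩ | ⟨⟩) hadj2 hw
          · obtain ⟨-, hx⟩ := adj_pv_inl.mp hadj2
            simp only [he, Sym2.mem_iff] at hx
            rcases hx with rfl | rfl
            · exact absurd ha hw
            · exact absurd hb hw
          · exact absurd (hpath e' j) hw
          · rfl
      have hWk : W.ncard ≤ k := hk.2 ⟨W, hindep, rfl⟩
      have hWc : W.ncard + Wᶜ.ncard = Fintype.card V := by
        rw [Set.ncard_add_ncard_compl, Nat.card_eq_fintype_card]
      have hsub : insert (Sum.inr (Sum.inr ()) : GVert G) (Sum.inl '' Wᶜ) ⊆ Sᶜ := by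
        rintro w (rfl | ⟨x, hx, rfl⟩)
        · exact heps
        · exact hx
      have hcard : Wᶜ.ncard + 1 ≤ Sᶜ.ncard := by
        have h1 := Set.ncard_le_ncard hsub (Set.toFinite _)
        rw [Set.ncard_insert_of_notMem (by simp) (Set.toFinite _),
          Set.ncard_image_of_injective _ Sum.inl_injective] at h1
        omega
      omega
  · -- some path vertex empty
    push_neg at hpath
    obtain ⟨e, j₀, hj₀⟩ := hpath
    have := path_count hS e hj₀
    omega

end


section
variable {V : Type*} [Fintype V] {G : SimpleGraph V}

lemma witness_exists (hG : G.Connected) (k : ℕ)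
    (hk : IsGreatest {m | ∃ U : Set V, IndepIn G U ∧ U.ncard = m} k) :
    ∃ S : Set (GVert G), S ≠ Set.univ ∧ Stalled (GG G) S ∧
      S.ncard = (2 * Fintype.card V + 1) * G.edgeSet.ncard + k := by
  obtain ⟨U, hU, hUcard⟩ := hk.1
  set P : Set (GVert G) :=
    Set.range (fun p : ↥G.edgeSet × Fin (2 * Fintype.card V + 1) => Sum.inr (Sum.inl p)) with hP
  set S : Set (GVert G) := Sum.inl '' U ∪ P with hSdef
  have hmemP : ∀ (e : G.edgeSet) (j : Fin (2 * Fintype.card V + 1)),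
      (Sum.inr (Sum.inl (e, j)) : GVert G) ∈ S := by
    intro e j
    exact Or.inr ⟨(e, j), rfl⟩
  have hepsnot : (Sum.inr (Sum.inr ()) : GVert G) ∉ S := by
    rintro (⟨x, -, h⟩ | ⟨p, h⟩) <;> simp at h
  have hinlmem : ∀ x : V, ((Sum.inl x : GVert G) ∈ S ↔ x ∈ U) := by
    intro x
    constructor
    · rintro (⟨y, hy, h⟩ | ⟨p, h⟩)
      · obtain rfl : y = x := Sum.inl_injective h
        exact hy
      · simp at h
    · intro hx
      exact Or.inl ⟨x, hx, rfl⟩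
  refine ⟨S, ?_, ?_, ?_⟩
  · intro h
    exact hepsnot (h ▸ Set.mem_univ _)
  · rintro v ⟨hv, u, huS, hadj, huniq⟩
    rcases u with x | ⟨e, i⟩ | ⟨⟩
    · -- u = inl x : all its neighbors are path vertices, which are filled
      rcases v with y | ⟨e', j⟩ | ⟨⟩
      · exact not_adj_inl_inl hadj
      · exact hv (hmemP e' j)
      · exact not_adj_inl_eps hadj
    · -- u is a path vertex
      have hi0 : i.val = 0 := by
        rcases v with y | ⟨e', j⟩ | ⟨⟩
        · exact (adj_pv_inl.mp hadj).1
        · exact absurd (hmemP e' j) hv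
        · exact adj_pv_eps.mp hadj
      -- find an empty endpoint of e
      obtain ⟨a, b, hab⟩ : ∃ a b : V, (e : Sym2 V) = s(a, b) := by
        rcases e with ⟨e', he'⟩
        induction e' using Sym2.ind with
        | _ a b => exact ⟨a, b, rfl⟩
      have hGab : G.Adj a b := by
        have := e.2
        rwa [hab, SimpleGraph.mem_edgeSet] at this
      have hc : ∃ c, c ∈ (e : Sym2 V) ∧ c ∉ U := by
        by_cases ha : a ∈ U
        · refine ⟨b, by rw [hab]; exact Sym2.mem_mk_right a b, ?_⟩
          intro hb
          exact hU ha hb hGab.ne hGab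
        · exact ⟨a, by rw [hab]; exact Sym2.mem_mk_left a b, ha⟩
      obtain ⟨c, hce, hcU⟩ := hc
      have h1 : (Sum.inl c : GVert G) = v :=
        huniq _ (adj_pv_inl.mpr ⟨hi0, hce⟩) (fun h => hcU ((hinlmem c).mp h))
      have h2 : (Sum.inr (Sum.inr ()) : GVert G) = v :=
        huniq _ (adj_pv_eps.mpr hi0) hepsnot
      rw [← h1] at h2
      exact absurd h2 (by simp)
    · exact hepsnot huS
  · -- cardinality
    have hdisj : Disjoint (Sum.inl '' U : Set (GVert G)) P := by
      rw [Set.disjoint_left]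
      rintro w ⟨x, -, rfl⟩ ⟨p, h⟩
      simp at h
    rw [hSdef, Set.ncard_union_eq hdisj (Set.toFinite _) (Set.toFinite _),
      Set.ncard_image_of_injective _ Sum.inl_injective, hUcard]
    have hPcard : P.ncard = (2 * Fintype.card V + 1) * G.edgeSet.ncard := by
      have hinj : Function.Injective
          (fun p : ↥G.edgeSet × Fin (2 * Fintype.card V + 1) =>
            (Sum.inr (Sum.inl p) : GVert G)) := by
        intro p q h
        simpa using h
      rw [hP, ← Set.image_univ, Set.ncard_image_of_injective _ hinj, Set.ncard_univ,
        Nat.card_prod, Nat.card_eq_fintype_card (α := Fin (2 * Fintype.card V + 1)),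
        Fintype.card_fin, Nat.card_coe_set_eq]
      ring
    omega

lemma total_card :
    Nat.card (GVert G) = Fintype.card V + (2 * Fintype.card V + 1) * G.edgeSet.ncard + 1 := by
  rw [Nat.card_sum, Nat.card_sum, Nat.card_prod, Nat.card_eq_fintype_card (α := V),
    Nat.card_eq_fintype_card (α := Fin (2 * Fintype.card V + 1)), Fintype.card_fin,
    Nat.card_eq_fintype_card (α := Unit), Fintype.card_unit, Nat.card_coe_set_eq]
  ring


end

/-- for connected `G` with independence number `k`, the largest
cardinality of a proper stalled subset of `𝒢` is `(2n+1)·|E| + k`. -/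
theorem greatest_proper_stalled {V : Type*} [Fintype V] (G : SimpleGraph V)
    (hG : G.Connected) (k : ℕ)
    (hk : IsGreatest {m | ∃ U : Set V, IndepIn G U ∧ U.ncard = m} k) :
    IsGreatest {m | ∃ S : Set (GVert G), S ≠ Set.univ ∧ Stalled (GG G) S ∧ S.ncard = m}
      ((2 * Fintype.card V + 1) * G.edgeSet.ncard + k) := by
  constructor
  · exact witness_exists hG k hk
  · rintro m ⟨S, hne, hS, rfl⟩
    have h1 := compl_bound hS hne hG k hk
    have h2 : S.ncard + Sᶜ.ncard = Nat.card (GVert G) :=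
      Set.ncard_add_ncard_compl S
    rw [total_card] at h2
    omega
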